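/- Let ε, ζ, M1, M2 > 0, let g : ℝ × ℝ → ℝ, and let h0 : ℝ → ℝ be differentiable with g(x, h0(x)) = 0 for all x and |h0'(x)| ≤ M1 for all x. Suppose g satisfies the contractivity condition (g(x, y1) − g(x, y2))·(y1 − y2) ≤ −ζ·(y1 − y2)² for all x, y1, y2. Let x, y : [0,∞) → ℝ be differentiable with ε·y'(T) = g(x(T), y(T)) and |x'(T)| ≤ M2 for all T ≥ 0. Then for all T ≥ 0: |y(T) − h0(x(T))| ≤ |y(0) − h0(x(0))|·exp(−ζ·T/(2ε)) + ε·M1·M2/ζ. -/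

import Mathlib

lemma sqrt_add_le' {a b : ℝ} (ha : 0 ≤ a) (hb : 0 ≤ b) :
    Real.sqrt (a + b) ≤ Real.sqrt a + Real.sqrt b := by
  have h : a + b ≤ (Real.sqrt a + Real.sqrt b) ^ 2 := by
    nlinarith [Real.sq_sqrt ha, Real.sq_sqrt hb,
      mul_nonneg (Real.sqrt_nonneg a) (Real.sqrt_nonneg b)]
  calc Real.sqrt (a + b) ≤ Real.sqrt ((Real.sqrt a + Real.sqrt b) ^ 2) :=
        Real.sqrt_le_sqrt h
    _ = Real.sqrt a + Real.sqrt b := Real.sqrt_sq (by positivity)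

theorem slowly_varying_lyapunov (ε ζ M1 M2 : ℝ)
    (hε : 0 < ε) (hζ : 0 < ζ) (hM1 : 0 < M1) (hM2 : 0 < M2)
    (g : ℝ → ℝ → ℝ) (h0 : ℝ → ℝ)
    (hh0 : Differentiable ℝ h0)
    (hzero : ∀ x : ℝ, g x (h0 x) = 0)
    (hslope : ∀ x : ℝ, |deriv h0 x| ≤ M1)
    (hcontr : ∀ x y1 y2 : ℝ, (g x y1 - g x y2) * (y1 - y2) ≤ -ζ * (y1 - y2) ^ 2)
    (x y : ℝ → ℝ)
    (hx : Differentiable ℝ x) (hy : Differentiable ℝ y)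
    (hfast : ∀ T : ℝ, 0 ≤ T → ε * deriv y T = g (x T) (y T))
    (hxspeed : ∀ T : ℝ, 0 ≤ T → |deriv x T| ≤ M2) :
    ∀ T : ℝ, 0 ≤ T →
      |y T - h0 (x T)| ≤
        |y 0 - h0 (x 0)| * Real.exp (-ζ * T / (2 * ε)) + ε * M1 * M2 / ζ := by
  intro T hT
  set k : ℝ := ζ / ε with hkdef
  have hk0 : 0 < k := div_pos hζ hε
  set C : ℝ := (ε * M1 * M2 / ζ) ^ 2 with hCdef
  have hC0 : 0 ≤ C := sq_nonneg _
  set w : ℝ → ℝ := fun t => y t - h0 (x t) with hwdef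
  have hwdiff : Differentiable ℝ w := hy.sub (hh0.comp hx)
  set v : ℝ → ℝ := fun t => w t ^ 2 with hvdef
  have hvdiff : Differentiable ℝ v := hwdiff.pow 2
  have hwd : ∀ t : ℝ, deriv w t = deriv y t - deriv h0 (x t) * deriv x t := by
    intro t
    have h1 : deriv w t = deriv y t - deriv (fun s => h0 (x s)) t :=
      deriv_sub (hy t) ((hh0.comp hx) t)
    rw [h1, show (fun s => h0 (x s)) = h0 ∘ x from rfl,
      deriv_comp t (hh0 (x t)) (hx t)]
  have hvd : ∀ t : ℝ, deriv v t = 2 * w t * deriv w t := by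
    intro t
    simp only [hvdef]
    rw [deriv_fun_pow (hwdiff t) 2]
    ring
  -- key differential inequality
  have key : ∀ t : ℝ, 0 ≤ t → deriv v t ≤ -k * v t + k * C := by
    intro t ht
    have hd := hvd t
    rw [hwd t] at hd
    have hyd : deriv y t = g (x t) (y t) / ε := by
      rw [eq_div_iff (ne_of_gt hε)]
      linarith [hfast t ht]
    have hgc : g (x t) (y t) * w t ≤ -ζ * w t ^ 2 := by
      have := hcontr (x t) (y t) (h0 (x t))
      rw [hzero (x t)] at this
      simpa [hwdef] using this
    have hcross : -(2 * w t * (deriv h0 (x t) * deriv x t)) ≤ k * w t ^ 2 + k * C := by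
      have h1 : -(2 * w t * (deriv h0 (x t) * deriv x t)) ≤ 2 * |w t| * (M1 * M2) := by
        calc -(2 * w t * (deriv h0 (x t) * deriv x t))
            ≤ |2 * w t * (deriv h0 (x t) * deriv x t)| := neg_le_abs _
          _ = 2 * |w t| * (|deriv h0 (x t)| * |deriv x t|) := by
              rw [abs_mul, abs_mul, abs_mul]; simp [abs_of_nonneg]
          _ ≤ 2 * |w t| * (M1 * M2) := by
              apply mul_le_mul_of_nonneg_left _ (by positivity)
              exact mul_le_mul (hslope (x t)) (hxspeed t ht) (abs_nonneg _) hM1.le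
      have hkC : k * C = (M1 * M2) ^ 2 / k := by
        rw [hCdef, hkdef]; field_simp
      have h2 : 2 * |w t| * (M1 * M2) ≤ k * w t ^ 2 + (M1 * M2) ^ 2 / k := by
        have habs : |w t| ^ 2 = w t ^ 2 := sq_abs _
        rw [← sub_nonneg]
        have heq : k * w t ^ 2 + (M1 * M2) ^ 2 / k - 2 * |w t| * (M1 * M2)
            = (k * |w t| - M1 * M2) ^ 2 / k := by
          field_simp
          rw [← habs]
          ring
        rw [heq]; positivity
      rw [hkC]; exact h1.trans h2
    have hεk : 2 / ε * (-ζ * w t ^ 2) = -(2 * k) * w t ^ 2 := by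
      rw [hkdef]; ring
    have hgpart : 2 * w t * deriv y t ≤ -(2 * k) * w t ^ 2 := by
      rw [hyd, ← hεk]
      have heq : 2 * w t * (g (x t) (y t) / ε) = 2 / ε * (g (x t) (y t) * w t) := by
        field_simp
      rw [heq]
      exact mul_le_mul_of_nonneg_left hgc (by positivity)
    have hfin : deriv v t ≤ -(2 * k) * w t ^ 2 + (k * w t ^ 2 + k * C) := by
      rw [hd]; nlinarith [hgpart, hcross]
    have hvt : v t = w t ^ 2 := by rw [hvdef]
    rw [hvt]; linarith
  -- Gronwall via monotone auxiliary function
  set u : ℝ → ℝ := fun t => (v t - C) * Real.exp (k * t) with hudef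
  have hEd : ∀ t : ℝ, HasDerivAt (fun s => Real.exp (k * s)) (k * Real.exp (k * t)) t := by
    intro t
    have := ((hasDerivAt_id t).const_mul k).exp
    simpa [mul_comm] using this
  have hud : ∀ t : ℝ, HasDerivAt u
      (deriv v t * Real.exp (k * t) + (v t - C) * (k * Real.exp (k * t))) t := by
    intro t
    exact ((hvdiff t).hasDerivAt.sub_const C).mul (hEd t)
  have hudiff : Differentiable ℝ u := fun t => (hud t).differentiableAt
  have hanti : AntitoneOn u (Set.Ici (0 : ℝ)) := by
    apply antitoneOn_of_deriv_nonpos (convex_Ici 0) hudiff.continuous.continuousOn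
      (hudiff.differentiableOn.mono interior_subset)
    intro t ht
    rw [interior_Ici] at ht
    rw [(hud t).deriv]
    have h1 := key t (le_of_lt ht)
    have h2 : (0:ℝ) < Real.exp (k * t) := Real.exp_pos _
    nlinarith [h1, h2]
  have huT : u T ≤ u 0 := hanti Set.self_mem_Ici hT hT
  have hvT : v T ≤ v 0 * Real.exp (-(k * T)) + C := by
    have h0' : u 0 = v 0 - C := by simp [hudef]
    have hexple : Real.exp (-(k * T)) ≤ 1 :=
      Real.exp_le_one_iff.mpr (by nlinarith)
    have hle : (v T - C) * Real.exp (k * T) ≤ v 0 - C := by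
      rw [← h0']; simpa [hudef] using huT
    have h4 := mul_le_mul_of_nonneg_right hle (Real.exp_pos (-(k * T))).le
    rw [mul_assoc, ← Real.exp_add] at h4
    simp only [add_neg_cancel, Real.exp_zero, mul_one] at h4
    nlinarith [hC0, hexple, Real.exp_pos (-(k * T))]
  -- conclude
  have hv0 : 0 ≤ v 0 * Real.exp (-(k * T)) := by
    have : (0:ℝ) ≤ v 0 := by rw [hvdef]; positivity
    positivity
  have hwT : ∀ t : ℝ, Real.sqrt (v t) = |w t| := by
    intro t
    rw [hvdef]
    exact Real.sqrt_sq_eq_abs _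
  have hfinal : Real.sqrt (v T) ≤ |w 0| * Real.exp (-ζ * T / (2 * ε)) + ε * M1 * M2 / ζ := by
    have hvnn : (0:ℝ) ≤ v 0 := by rw [hvdef]; positivity
    calc Real.sqrt (v T) ≤ Real.sqrt (v 0 * Real.exp (-(k * T)) + C) :=
          Real.sqrt_le_sqrt hvT
      _ ≤ Real.sqrt (v 0 * Real.exp (-(k * T))) + Real.sqrt C := sqrt_add_le' hv0 hC0
      _ = |w 0| * Real.exp (-ζ * T / (2 * ε)) + ε * M1 * M2 / ζ := by
          rw [Real.sqrt_mul hvnn, hwT 0, ← Real.exp_half, hCdef,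
            Real.sqrt_sq (by positivity)]
          congr 2
          rw [hkdef]; ring
  have hres : |w T| ≤ |w 0| * Real.exp (-ζ * T / (2 * ε)) + ε * M1 * M2 / ζ := by
    rw [← hwT T]; exact hfinal
  simpa [hwdef] using hres
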